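/- arXiv:2204.04923 — 2 statements merged into one kernel-verified Lean document; each statement's English description precedes it below -/
import Mathlib

section
/- Let u : ∂B → ℝ be C¹ on the unit sphere ∂B ⊂ ℝⁿ with tangential gradient ∇u. For fixed x ∈ ∂B, the tangential divergence of T(y) = (u(y)-u(x))(y-x)/|x-y|^{n+s} on ∂B equals div^τ T(y) = -(s+1)(u(y)-u(x))/|x-y|^{n+s} + (n+s)(u(y)-u(x))/(4|x-y|^{n+s-2}) + (∇u(y)·(y-x))/|x-y|^{n+s}. -/
open Metric MeasureTheory

/-- The (full) divergence of a vector field on `ℝⁿ`. -/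
noncomputable def vdiv {n : ℕ}
    (T : EuclideanSpace ℝ (Fin n) → EuclideanSpace ℝ (Fin n))
    (y : EuclideanSpace ℝ (Fin n)) : ℝ :=
  ∑ i, fderiv ℝ T y (EuclideanSpace.single i 1) i

/-- The tangential divergence on the unit sphere: `div^τ T(y) = div T(y) - y·(DT(y) y)`. -/
noncomputable def tdiv {n : ℕ}
    (T : EuclideanSpace ℝ (Fin n) → EuclideanSpace ℝ (Fin n))
    (y : EuclideanSpace ℝ (Fin n)) : ℝ :=
  vdiv T y - (inner ℝ y (fderiv ℝ T y y) : ℝ)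

lemma sum_coord_mul (n : ℕ) (v w : EuclideanSpace ℝ (Fin n)) :
    ∑ i, v i * w i = (inner ℝ v w : ℝ) := by
  rw [PiLp.inner_apply]; simp [RCLike.inner_apply, conj_trivial, mul_comm]

lemma sum_single_diag (n : ℕ) :
    ∑ i : Fin n, (EuclideanSpace.single i (1:ℝ)) i = n := by
  simp [EuclideanSpace.single_apply]

lemma fderiv_eq_inner_grad (n : ℕ) (u : EuclideanSpace ℝ (Fin n) → ℝ)
    (y v : EuclideanSpace ℝ (Fin n)) :
    fderiv ℝ u y v = (inner ℝ (gradient u y) v : ℝ) := by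
  rw [gradient, InnerProductSpace.toDual_symm_apply]

set_option maxHeartbeats 2000000 in
/-- Tangential divergence of `T(y) = (u(y)-u(x))(y-x)/|x-y|^{n+s}` on the unit sphere:
`div^τ T(y) = -(s+1)(u(y)-u(x))/|x-y|^{n+s} + (n+s)(u(y)-u(x))/(4|x-y|^{n+s-2})
  + ∇u(y)·(y-x)/|x-y|^{n+s}`. -/
theorem tangential_div_of_kernel_field (n : ℕ) (hn : 2 ≤ n) (s : ℝ)
    (hs : s ∈ Set.Ioo (0 : ℝ) 1)
    (u : EuclideanSpace ℝ (Fin n) → ℝ)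
    (hu : ContDiffOn ℝ 1 u {0}ᶜ)
    (hhom : ∀ c : ℝ, 0 < c → ∀ y, u (c • y) = u y)
    (x y : EuclideanSpace ℝ (Fin n))
    (hx : x ∈ sphere (0 : EuclideanSpace ℝ (Fin n)) 1)
    (hy : y ∈ sphere (0 : EuclideanSpace ℝ (Fin n)) 1)
    (hxy : y ≠ x) :
    tdiv (fun z => (‖x - z‖ ^ ((n : ℝ) + s))⁻¹ • ((u z - u x) • (z - x))) y
      = -(s + 1) * (u y - u x) / ‖x - y‖ ^ ((n : ℝ) + s)
        + ((n : ℝ) + s) * (u y - u x) / (4 * ‖x - y‖ ^ ((n : ℝ) + s - 2))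
        + (inner ℝ (gradient u y) (y - x) : ℝ) / ‖x - y‖ ^ ((n : ℝ) + s) := by
  obtain ⟨hs0, hs1⟩ := hs
  have hny : ‖y‖ = 1 := by simpa using hy
  have hnx : ‖x‖ = 1 := by simpa using hx
  have hy0 : y ≠ 0 := by intro h; rw [h] at hny; simp at hny
  have hsub0 : x - y ≠ 0 := sub_ne_zero.mpr (Ne.symm hxy)
  have hr : (0:ℝ) < ‖x - y‖ := norm_pos_iff.mpr hsub0
  set r : ℝ := ‖x - y‖ with hrdef
  set p : ℝ := (n : ℝ) + s with hpdef
  have hp : 0 < p := by positivity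
  have hud : DifferentiableAt ℝ u y :=
    (hu.contDiffAt (isOpen_compl_singleton.mem_nhds hy0)).differentiableAt one_ne_zero
  -- Euler relation
  have hEuler : fderiv ℝ u y y = 0 := by
    have hud' : HasFDerivAt u (fderiv ℝ u y) ((1:ℝ) • y) := by
      rw [one_smul]; exact hud.hasFDerivAt
    have hsm : HasDerivAt (fun c : ℝ => c • y) y 1 := by
      simpa using (hasDerivAt_id (1:ℝ)).smul_const y
    have h1 : HasDerivAt (fun c : ℝ => u (c • y)) (fderiv ℝ u y y) 1 :=
      hud'.comp_hasDerivAt 1 hsm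
    have h2 : HasDerivAt (fun c : ℝ => u (c • y)) 0 1 := by
      have hev : (fun c : ℝ => u (c • y)) =ᶠ[nhds (1:ℝ)] fun _ => u y := by
        filter_upwards [eventually_gt_nhds (show (0:ℝ) < 1 by norm_num)] with c hc
        exact hhom c hc y
      exact (hasDerivAt_const (1:ℝ) (u y)).congr_of_eventuallyEq hev
    exact h1.unique h2
  -- derivative of q z = ⟪x - z, x - z⟫
  have hsubf : HasFDerivAt (fun z : EuclideanSpace ℝ (Fin n) => x - z)
      (-(ContinuousLinearMap.id ℝ (EuclideanSpace ℝ (Fin n)))) y := by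
    exact (hasFDerivAt_id y).const_sub x
  have hq : HasFDerivAt (fun z : EuclideanSpace ℝ (Fin n) => (inner ℝ (x - z) (x - z) : ℝ))
      ((fderivInnerCLM ℝ (x - y, x - y)).comp
        ((-(ContinuousLinearMap.id ℝ (EuclideanSpace ℝ (Fin n)))).prod
          (-(ContinuousLinearMap.id ℝ (EuclideanSpace ℝ (Fin n)))))) y :=
    hsubf.inner ℝ hsubf
  have hqy : (inner ℝ (x - y) (x - y) : ℝ) = r ^ 2 := real_inner_self_eq_norm_sq _
  have hqypos : (0:ℝ) < (inner ℝ (x - y) (x - y) : ℝ) := by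
    rw [hqy]; positivity
  have hφ : HasFDerivAt
      (fun z : EuclideanSpace ℝ (Fin n) => (inner ℝ (x - z) (x - z) : ℝ) ^ (-p/2))
      ((-p/2 * (inner ℝ (x - y) (x - y) : ℝ) ^ (-p/2 - 1)) •
        ((fderivInnerCLM ℝ (x - y, x - y)).comp
          ((-(ContinuousLinearMap.id ℝ (EuclideanSpace ℝ (Fin n)))).prod
            (-(ContinuousLinearMap.id ℝ (EuclideanSpace ℝ (Fin n))))))) y := by
    have hrpow : HasDerivAt (fun t : ℝ => t ^ (-p/2))
        (-p/2 * (inner ℝ (x - y) (x - y) : ℝ) ^ (-p/2 - 1)) ((inner ℝ (x - y) (x - y) : ℝ)) := by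
      simpa [mul_comm] using Real.hasDerivAt_rpow_const (p := -p/2) (Or.inl hqypos.ne')
    exact hrpow.comp_hasFDerivAt y hq
  have hg : HasFDerivAt (fun z : EuclideanSpace ℝ (Fin n) => u z - u x) (fderiv ℝ u y) y :=
    (hud.hasFDerivAt).sub_const (u x)
  have hid : HasFDerivAt (fun z : EuclideanSpace ℝ (Fin n) => z - x)
      (ContinuousLinearMap.id ℝ (EuclideanSpace ℝ (Fin n))) y :=
    (hasFDerivAt_id y).sub_const x
  have hW : HasFDerivAt (fun z : EuclideanSpace ℝ (Fin n) => (u z - u x) • (z - x))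
      ((u y - u x) • ContinuousLinearMap.id ℝ (EuclideanSpace ℝ (Fin n))
        + (fderiv ℝ u y).smulRight (y - x)) y := hg.smul hid
  have hT : HasFDerivAt
      (fun z : EuclideanSpace ℝ (Fin n) =>
        ((inner ℝ (x - z) (x - z) : ℝ) ^ (-p/2)) • ((u z - u x) • (z - x)))
      (((inner ℝ (x - y) (x - y) : ℝ) ^ (-p/2)) •
          ((u y - u x) • ContinuousLinearMap.id ℝ (EuclideanSpace ℝ (Fin n))
            + (fderiv ℝ u y).smulRight (y - x))
        + ((-p/2 * (inner ℝ (x - y) (x - y) : ℝ) ^ (-p/2 - 1)) •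
            ((fderivInnerCLM ℝ (x - y, x - y)).comp
              ((-(ContinuousLinearMap.id ℝ (EuclideanSpace ℝ (Fin n)))).prod
                (-(ContinuousLinearMap.id ℝ (EuclideanSpace ℝ (Fin n))))))).smulRight
            ((u y - u x) • (y - x))) y := hφ.smul hW
  have hfun : (fun z : EuclideanSpace ℝ (Fin n) => (‖x - z‖ ^ p)⁻¹ • ((u z - u x) • (z - x)))
      = fun z : EuclideanSpace ℝ (Fin n) =>
          ((inner ℝ (x - z) (x - z) : ℝ) ^ (-p/2)) • ((u z - u x) • (z - x)) := by
    funext z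
    congr 1
    have h2 : ((2:ℕ):ℝ) * (-p/2) = -p := by push_cast; ring
    rw [real_inner_self_eq_norm_sq, ← Real.rpow_natCast ‖x - z‖ 2,
      ← Real.rpow_mul (norm_nonneg _), h2, Real.rpow_neg (norm_nonneg _)]
  set gy : ℝ := u y - u x with hgy
  set φy : ℝ := (inner ℝ (x - y) (x - y) : ℝ) ^ (-p/2) with hφy
  set cc : ℝ := -p/2 * (inner ℝ (x - y) (x - y) : ℝ) ^ (-p/2 - 1) with hcc
  set gr : EuclideanSpace ℝ (Fin n) := gradient u y with hgr
  -- coordinate formula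
  have hcoord : ∀ i, (fderiv ℝ (fun z : EuclideanSpace ℝ (Fin n) =>
        ((inner ℝ (x - z) (x - z) : ℝ) ^ (-p/2)) • ((u z - u x) • (z - x))) y)
        (EuclideanSpace.single i 1) i
      = (φy * gy) * ((EuclideanSpace.single i (1:ℝ)) i)
        + φy * ((gr i) * ((y - x) i))
        + (-2 * cc * gy) * (((x - y) i) * ((y - x) i)) := by
    intro i
    rw [hT.fderiv]
    simp only [ContinuousLinearMap.add_apply, ContinuousLinearMap.smul_apply,
      ContinuousLinearMap.smulRight_apply, ContinuousLinearMap.coe_comp',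
      Function.comp_apply, ContinuousLinearMap.prod_apply, ContinuousLinearMap.neg_apply,
      ContinuousLinearMap.id_apply, fderivInnerCLM_apply, PiLp.add_apply, PiLp.smul_apply,
      smul_eq_mul, inner_neg_right, inner_neg_left]
    rw [fderiv_eq_inner_grad, ← hgr]
    have h1 : (inner ℝ gr (EuclideanSpace.single i (1:ℝ)) : ℝ) = gr i := by
      rw [EuclideanSpace.inner_single_right]; simp
    have h2 : (inner ℝ (x - y) (EuclideanSpace.single i (1:ℝ)) : ℝ) = (x - y) i := by
      rw [EuclideanSpace.inner_single_right]; simp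
    have h3 : (inner ℝ (EuclideanSpace.single i (1:ℝ)) (x - y) : ℝ) = (x - y) i := by
      rw [EuclideanSpace.inner_single_left]; simp
    rw [h1, h2, h3]
    ring
  -- inner ℝ product scalar values
  have hyy : (inner ℝ y y : ℝ) = 1 := by
    rw [real_inner_self_eq_norm_sq, hny]; norm_num
  have hxy2 : (inner ℝ x y : ℝ) = 1 - r ^ 2 / 2 := by
    have h := norm_sub_sq_real x y
    rw [hnx, hny, ← hrdef] at h
    linarith
  have hxmyy : (inner ℝ (x - y) y : ℝ) = -(r ^ 2) / 2 := by
    rw [inner_sub_left, hxy2, hyy]; ring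
  have hyymx : (inner ℝ y (y - x) : ℝ) = r ^ 2 / 2 := by
    have hc : (inner ℝ y x : ℝ) = inner ℝ x y := real_inner_comm x y
    rw [inner_sub_right, hyy, hc, hxy2]; ring
  have hxmyymx : (inner ℝ (x - y) (y - x) : ℝ) = -(r ^ 2) := by
    have : y - x = -(x - y) := by abel
    rw [this, inner_neg_right, real_inner_self_eq_norm_sq, ← hrdef]
  -- sum formula
  have hsum : ∑ i, (fderiv ℝ (fun z : EuclideanSpace ℝ (Fin n) =>
        ((inner ℝ (x - z) (x - z) : ℝ) ^ (-p/2)) • ((u z - u x) • (z - x))) y)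
        (EuclideanSpace.single i 1) i
      = (φy * gy) * (n : ℝ) + φy * (inner ℝ gr (y - x) : ℝ)
        + (-2 * cc * gy) * (inner ℝ (x - y) (y - x) : ℝ) := by
    simp_rw [hcoord]
    rw [Finset.sum_add_distrib, Finset.sum_add_distrib, ← Finset.mul_sum, ← Finset.mul_sum,
      ← Finset.mul_sum, sum_single_diag, sum_coord_mul, sum_coord_mul]
  -- inner ℝ formula
  have hinner : (inner ℝ y ((fderiv ℝ (fun z : EuclideanSpace ℝ (Fin n) =>
        ((inner ℝ (x - z) (x - z) : ℝ) ^ (-p/2)) • ((u z - u x) • (z - x))) y) y) : ℝ)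
      = φy * gy * (inner ℝ y y : ℝ)
        + (-2 * cc * gy) * ((inner ℝ (x - y) y : ℝ) * (inner ℝ y (y - x) : ℝ)) := by
    rw [hT.fderiv]
    simp only [ContinuousLinearMap.add_apply, ContinuousLinearMap.smul_apply,
      ContinuousLinearMap.smulRight_apply, ContinuousLinearMap.coe_comp',
      Function.comp_apply, ContinuousLinearMap.prod_apply, ContinuousLinearMap.neg_apply,
      ContinuousLinearMap.id_apply, fderivInnerCLM_apply, inner_neg_right, inner_neg_left,
      hEuler, inner_add_right, inner_smul_right, real_inner_smul_right, smul_eq_mul,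
      zero_smul, inner_zero_right, zero_mul, add_zero, mul_zero]
    ring_nf
    rw [real_inner_comm y (x - y)]
    ring
  -- powers of r
  have hApos : (0:ℝ) < r ^ p := Real.rpow_pos_of_pos hr p
  have hBpos : (0:ℝ) < r ^ (p - 2) := Real.rpow_pos_of_pos hr _
  have hr2 : r ^ ((2:ℕ):ℝ) = r ^ 2 := Real.rpow_natCast r 2
  have hAB : r ^ p = r ^ (p - 2) * r ^ 2 := by
    rw [← hr2, ← Real.rpow_add hr]
    norm_num
  have hφyr : φy = (r ^ p)⁻¹ := by
    rw [hφy, hqy, ← Real.rpow_natCast r 2, ← Real.rpow_mul hr.le]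
    rw [show ((2:ℕ):ℝ) * (-p/2) = -p by push_cast; ring, Real.rpow_neg hr.le]
  have hccr : cc = -p/2 * (r ^ p * r ^ 2)⁻¹ := by
    rw [hcc, hqy, ← Real.rpow_natCast r 2, ← Real.rpow_mul hr.le]
    rw [show ((2:ℕ):ℝ) * (-p/2 - 1) = -(p + ((2:ℕ):ℝ)) by push_cast; ring,
      Real.rpow_neg hr.le, Real.rpow_add hr, hr2]
  -- finish
  unfold tdiv vdiv
  rw [hfun, hsum, hinner, hyy, hxmyy, hyymx, hxmyymx, hφyr, hccr, hAB]
  rw [hpdef]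
  have hBne : r ^ ((n:ℝ) + s - 2) ≠ 0 := by
    have h := hBpos.ne'; rwa [hpdef] at h
  field_simp
  ring
end

section
/- Let E be a nearly spherical set over the ball B with height function u, ||u||_{C¹} ≤ ε small, such that the barycenter of E equals 0. Then |∫_{∂B} y u(y) dH^{n-1}(y)|² ≤ C(n) ε ||u||²_{L²(∂B)}. -/
open Metric MeasureTheory Finset


lemma coord_le_norm {k : ℕ} (x : EuclideanSpace ℝ (Fin k)) (i : Fin k) : |x i| ≤ ‖x‖ := by
  rw [EuclideanSpace.norm_eq]
  have h : |x i| = Real.sqrt (‖x i‖ ^ 2) := by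
    rw [Real.sqrt_sq (norm_nonneg _)]; exact (Real.norm_eq_abs _).symm
  rw [h]
  exact Real.sqrt_le_sqrt (Finset.single_le_sum (f := fun j => ‖x j‖ ^ 2) (fun j _ => sq_nonneg _) (mem_univ i))

lemma radial_lip {k : ℕ} :
    LipschitzOnWith 2 (fun x : EuclideanSpace ℝ (Fin k) => ‖x‖⁻¹ • x) {x | 1 ≤ ‖x‖} := by
  apply LipschitzOnWith.of_dist_le_mul
  intro x hx y hy
  simp only [Set.mem_setOf_eq] at hx hy
  have hxpos : (0:ℝ) < ‖x‖ := lt_of_lt_of_le one_pos hx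
  have hypos : (0:ℝ) < ‖y‖ := lt_of_lt_of_le one_pos hy
  have key : ‖x‖⁻¹ • x - ‖y‖⁻¹ • y = ‖x‖⁻¹ • (x - y) + (‖x‖⁻¹ - ‖y‖⁻¹) • y := by
    rw [smul_sub, sub_smul]; abel
  have hc : ((2:NNReal):ℝ) = 2 := by norm_num
  rw [dist_eq_norm, dist_eq_norm, key, hc]
  have h1 : ‖(‖x‖⁻¹ : ℝ) • (x - y)‖ = ‖x‖⁻¹ * ‖x - y‖ := by
    rw [norm_smul, Real.norm_eq_abs, abs_of_pos (by positivity)]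
  have h2 : ‖((‖x‖⁻¹ - ‖y‖⁻¹ : ℝ)) • y‖ = |‖x‖⁻¹ - ‖y‖⁻¹| * ‖y‖ := by
    rw [norm_smul, Real.norm_eq_abs]
  have h3 : |‖x‖⁻¹ - ‖y‖⁻¹| ≤ ‖x - y‖ / (‖x‖ * ‖y‖) := by
    rw [inv_sub_inv (ne_of_gt hxpos) (ne_of_gt hypos), abs_div,
      abs_of_pos (mul_pos hxpos hypos)]
    gcongr
    rw [abs_sub_comm]
    exact abs_norm_sub_norm_le x y
  have hN : (0:ℝ) ≤ ‖x - y‖ := norm_nonneg _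
  have hxinv : ‖x‖⁻¹ ≤ 1 := inv_le_one_of_one_le₀ hx
  calc ‖(‖x‖⁻¹:ℝ) • (x - y) + ((‖x‖⁻¹ - ‖y‖⁻¹:ℝ)) • y‖
      ≤ ‖(‖x‖⁻¹:ℝ) • (x - y)‖ + ‖((‖x‖⁻¹ - ‖y‖⁻¹:ℝ)) • y‖ := norm_add_le _ _
    _ ≤ ‖x‖⁻¹ * ‖x - y‖ + (‖x - y‖ / (‖x‖ * ‖y‖)) * ‖y‖ := by
        rw [h1, h2]
        exact add_le_add le_rfl (mul_le_mul_of_nonneg_right h3 (norm_nonneg y))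
    _ = ‖x‖⁻¹ * ‖x - y‖ + ‖x - y‖ * ‖x‖⁻¹ := by
        field_simp
    _ ≤ 1 * ‖x - y‖ + ‖x - y‖ * 1 := by
        exact add_le_add (mul_le_mul_of_nonneg_right hxinv hN) (mul_le_mul_of_nonneg_left hxinv hN)
    _ ≤ 2 * ‖x - y‖ := by linarith




lemma cube_finite (m : ℕ) :
    μH[(m:ℝ)] {x : EuclideanSpace ℝ (Fin m) | ∀ j, |x j| ≤ 1} < ⊤ := by
  set e := WithLp.equiv 2 (Fin m → ℝ)
  have hanti := PiLp.antilipschitzWith_ofLp 2 (fun _ : Fin m => ℝ)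
  have hlip : LipschitzWith _ e.symm := hanti.to_rightInverse e.apply_symm_apply
  have hsub : {x : EuclideanSpace ℝ (Fin m) | ∀ j, |x j| ≤ 1}
      ⊆ e.symm '' {x : Fin m → ℝ | ∀ j, |x j| ≤ 1} := by
    intro x hx
    exact ⟨e x, hx, e.symm_apply_apply x⟩
  calc μH[(m:ℝ)] {x : EuclideanSpace ℝ (Fin m) | ∀ j, |x j| ≤ 1}
      ≤ μH[(m:ℝ)] (e.symm '' {x : Fin m → ℝ | ∀ j, |x j| ≤ 1}) := measure_mono hsub
    _ ≤ _ ^ (m:ℝ) * μH[(m:ℝ)] {x : Fin m → ℝ | ∀ j, |x j| ≤ 1} :=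
        hlip.hausdorffMeasure_image_le (Nat.cast_nonneg m) _
    _ < ⊤ := by
        apply ENNReal.mul_lt_top (by first
          | exact ENNReal.pow_lt_top ENNReal.coe_lt_top _
          | exact ENNReal.rpow_lt_top_of_nonneg (Nat.cast_nonneg m) ENNReal.coe_ne_top)
        have hμ : (μH[(m:ℝ)] : Measure (Fin m → ℝ)) = volume := by
          have := MeasureTheory.hausdorffMeasure_pi_real (ι := Fin m)
          simpa using this
        rw [hμ]
        have : {x : Fin m → ℝ | ∀ j, |x j| ≤ 1} ⊆ closedBall 0 1 := by
          intro x hx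
          rw [mem_closedBall, dist_zero_right]
          rw [pi_norm_le_iff_of_nonneg zero_le_one]
          simpa [Real.norm_eq_abs] using hx
        exact lt_of_le_of_lt (measure_mono this) (isCompact_closedBall 0 1).measure_lt_top

lemma face_finite (m : ℕ) (i : Fin (m+1)) (s : ℝ) :
    μH[(m:ℝ)] {x : EuclideanSpace ℝ (Fin (m+1)) | x i = s ∧ ∀ j, |x j| ≤ 1} < ⊤ := by
  set g : EuclideanSpace ℝ (Fin m) → EuclideanSpace ℝ (Fin (m+1)) :=
    fun x => WithLp.toLp 2 (i.insertNth s x) with hg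
  have hiso : Isometry g := by
    apply Isometry.of_dist_eq
    intro x y
    rw [EuclideanSpace.dist_eq, EuclideanSpace.dist_eq]
    congr 1
    rw [Fin.sum_univ_succAbove (fun j => dist (g x j) (g y j) ^ 2) i]
    simp [hg, Fin.insertNth_apply_same, Fin.insertNth_apply_succAbove]
  have hsub : {x : EuclideanSpace ℝ (Fin (m+1)) | x i = s ∧ ∀ j, |x j| ≤ 1}
      ⊆ g '' {x : EuclideanSpace ℝ (Fin m) | ∀ j, |x j| ≤ 1} := by
    rintro x ⟨hxi, hxb⟩
    refine ⟨WithLp.toLp 2 (i.removeNth x), fun j => hxb _, ?_⟩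
    rw [hg]
    simp only
    rw [← hxi]
    exact congrArg (WithLp.toLp 2) (Fin.insertNth_self_removeNth i x)
  calc μH[(m:ℝ)] {x : EuclideanSpace ℝ (Fin (m+1)) | x i = s ∧ ∀ j, |x j| ≤ 1}
      ≤ μH[(m:ℝ)] (g '' {x : EuclideanSpace ℝ (Fin m) | ∀ j, |x j| ≤ 1}) := measure_mono hsub
    _ = μH[(m:ℝ)] {x : EuclideanSpace ℝ (Fin m) | ∀ j, |x j| ≤ 1} :=
        hiso.hausdorffMeasure_image (Or.inl (Nat.cast_nonneg m)) _
    _ < ⊤ := cube_finite m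

lemma sphere_hausdorff_lt_top (m : ℕ) :
    μH[(m:ℝ)] (sphere (0 : EuclideanSpace ℝ (Fin (m+1))) 1) < ⊤ := by
  set F : Fin (m+1) → ℝ → Set (EuclideanSpace ℝ (Fin (m+1))) :=
    fun i s => {x | x i = s ∧ ∀ j, |x j| ≤ 1} with hF
  set T : Set (EuclideanSpace ℝ (Fin (m+1))) := ⋃ i, (F i 1 ∪ F i (-1)) with hT
  have hTD : T ⊆ {x | 1 ≤ ‖x‖} := by
    rintro x hx
    simp only [hT, Set.mem_iUnion, Set.mem_union] at hx
    obtain ⟨i, hi⟩ := hx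
    have h1 : |x i| = 1 := by
      rcases hi with h | h
      · rw [h.1]; norm_num
      · rw [h.1]; norm_num
    exact le_trans (le_of_eq h1.symm) (coord_le_norm x i)
  have hcov : sphere (0 : EuclideanSpace ℝ (Fin (m+1))) 1
      ⊆ (fun x : EuclideanSpace ℝ (Fin (m+1)) => ‖x‖⁻¹ • x) '' T := by
    intro y hy
    rw [mem_sphere_zero_iff_norm] at hy
    obtain ⟨i, -, hmax⟩ := Finset.exists_max_image Finset.univ (fun j => |y j|) ⟨0, mem_univ 0⟩
    have hmax' : ∀ j, |y j| ≤ |y i| := fun j => hmax j (mem_univ j)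
    set M := |y i| with hM
    have hMpos : 0 < M := by
      rcases lt_or_eq_of_le (abs_nonneg (y i)) with h | h
      · exact h
      · exfalso
        have : y = 0 := by
          ext j
          have h2 := hmax' j
          rw [hM, ← h] at h2
          show y j = (0:ℝ)
          exact abs_nonpos_iff.mp h2
        rw [this, norm_zero] at hy
        norm_num at hy
    have hM1 : M ≤ 1 := hy ▸ coord_le_norm y i
    set x := M⁻¹ • y with hx
    have hxj : ∀ j, x j = M⁻¹ * y j := fun j => rfl
    have hxb : ∀ j, |x j| ≤ 1 := by
      intro j
      rw [hxj, abs_mul, abs_inv, abs_of_pos hMpos]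
      rw [inv_mul_le_iff₀ hMpos, mul_one]
      exact hmax' j
    have hxi : |x i| = 1 := by
      rw [hxj, abs_mul, abs_inv, abs_of_pos hMpos, ← hM, inv_mul_cancel₀ (ne_of_gt hMpos)]
    have hxT : x ∈ T := by
      simp only [hT, Set.mem_iUnion, Set.mem_union]
      refine ⟨i, ?_⟩
      rcases abs_eq (le_of_lt one_pos) |>.mp hxi with h | h
      · exact Or.inl ⟨h, hxb⟩
      · exact Or.inr ⟨h, hxb⟩
    refine ⟨x, hxT, ?_⟩
    have hnx : ‖x‖ = M⁻¹ := by
      rw [hx, norm_smul, Real.norm_eq_abs, abs_inv, abs_of_pos hMpos, hy, mul_one]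
    simp only [hnx, hx, smul_smul, inv_inv]
    rw [← hx, hnx, inv_inv, mul_inv_cancel₀ (ne_of_gt hMpos), one_smul]
  calc μH[(m:ℝ)] (sphere (0 : EuclideanSpace ℝ (Fin (m+1))) 1)
      ≤ μH[(m:ℝ)] ((fun x : EuclideanSpace ℝ (Fin (m+1)) => ‖x‖⁻¹ • x) '' T) :=
        measure_mono hcov
    _ ≤ (2:NNReal) ^ (m:ℝ) * μH[(m:ℝ)] T :=
        (radial_lip.mono hTD).hausdorffMeasure_image_le (Nat.cast_nonneg m)
    _ < ⊤ := by
        apply ENNReal.mul_lt_top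
        · exact ENNReal.rpow_lt_top_of_nonneg (Nat.cast_nonneg m) ENNReal.coe_ne_top
        · calc μH[(m:ℝ)] T ≤ ∑' i : Fin (m+1), μH[(m:ℝ)] (F i 1 ∪ F i (-1)) :=
                measure_iUnion_le _
            _ < ⊤ := by
                rw [tsum_fintype]
                rw [ENNReal.sum_lt_top]
                intro i _
                exact lt_of_le_of_lt (measure_union_le _ _)
                  (ENNReal.add_lt_top.mpr ⟨face_finite m i 1, face_finite m i (-1)⟩)

lemma taylor_bound (m : ℕ) {t : ℝ} (ht : |t| ≤ 1) :
    |(1+t)^m - 1 - (m:ℝ)*t| ≤ 4^m * t^2 := by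
  induction m with
  | zero => simp; positivity
  | succ m ih =>
    have e : (1+t)^(m+1) - 1 - ((m+1:ℕ):ℝ)*t
        = (1+t)*((1+t)^m - 1 - (m:ℝ)*t) + (m:ℝ)*t^2 := by push_cast; ring
    have h1 : |1+t| ≤ 2 := by
      calc |1+t| ≤ |(1:ℝ)| + |t| := abs_add_le _ _
        _ ≤ 2 := by rw [abs_one]; linarith
    have hm : (m:ℝ) ≤ 2*4^m := by
      have := Nat.lt_two_pow_self (n := m)
      have h2 : (m:ℝ) < 2^m := by exact_mod_cast this
      have h3 : (2:ℝ)^m ≤ 4^m := by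
        apply pow_le_pow_left₀ (by norm_num) (by norm_num)
      linarith
    calc |(1+t)^(m+1) - 1 - ((m+1:ℕ):ℝ)*t|
        = |(1+t)*((1+t)^m - 1 - (m:ℝ)*t) + (m:ℝ)*t^2| := by rw [e]
      _ ≤ |(1+t)*((1+t)^m - 1 - (m:ℝ)*t)| + |(m:ℝ)*t^2| := abs_add_le _ _
      _ ≤ 2 * (4^m * t^2) + (m:ℝ)*t^2 := by
          apply add_le_add
          · rw [abs_mul]
            exact mul_le_mul h1 ih (abs_nonneg _) (by norm_num)
          · rw [abs_mul, abs_of_nonneg (sq_nonneg t), Nat.abs_cast]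
      _ ≤ 4^(m+1) * t^2 := by
          have h5 : (4:ℝ)^(m+1) = 4*4^m := by ring
          have h4 : (m:ℝ)*t^2 ≤ 2*4^m*t^2 :=
            mul_le_mul_of_nonneg_right hm (sq_nonneg t)
          rw [h5]
          nlinarith
set_option maxHeartbeats 1000000 in
lemma integral_id_sphere_zero (n : ℕ) (d : ℝ) :
    (∫ y in sphere (0 : EuclideanSpace ℝ (Fin n)) 1, y ∂μH[d]) = 0 := by
  set S : Set (EuclideanSpace ℝ (Fin n)) := sphere 0 1 with hS
  have hSmeas : MeasurableSet S := (isClosed_sphere).measurableSet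
  have hinvmap : Measure.map (fun x : EuclideanSpace ℝ (Fin n) => -x) μH[d] = μH[d] := by
    have h := IsometryEquiv.map_hausdorffMeasure (IsometryEquiv.neg (EuclideanSpace ℝ (Fin n))) d
    have hfun : ⇑(IsometryEquiv.neg (EuclideanSpace ℝ (Fin n)))
        = (fun x : EuclideanSpace ℝ (Fin n) => -x) := rfl
    rw [← hfun]
    exact h
  have hpre : (fun x : EuclideanSpace ℝ (Fin n) => -x) ⁻¹' S = S := by
    ext x
    simp [hS, mem_sphere_zero_iff_norm]
  have hmap : Measure.map (fun x : EuclideanSpace ℝ (Fin n) => -x) (μH[d].restrict S)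
      = μH[d].restrict S := by
    conv_rhs => rw [← hinvmap]
    rw [Measure.restrict_map measurable_neg hSmeas, hpre]
  set I := ∫ y in S, y ∂μH[d] with hI
  have key : I = -I := by
    conv_lhs => rw [hI, ← hmap]
    have h4 := integral_map (φ := fun x : EuclideanSpace ℝ (Fin n) => -x)
      (μ := μH[d].restrict S) (f := fun y : EuclideanSpace ℝ (Fin n) => y)
      measurable_neg.aemeasurable
      (Continuous.aestronglyMeasurable continuous_id)
    rw [h4, integral_neg]
  have h2 : I + I = 0 := by
    nth_rewrite 1 [key]; simp
  have h3 : (2:ℝ) • I = 0 := by rw [two_smul]; exact h2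
  rcases smul_eq_zero.mp h3 with h | h
  · norm_num at h
  · exact h




lemma integrable_of_bound {E : Type*} [NormedAddCommGroup E] [NormedSpace ℝ E] {m : ℕ}
    (f : EuclideanSpace ℝ (Fin (m+1)) → E) (c : ℝ) (hf : Continuous f)
    (hb : ∀ y ∈ sphere (0 : EuclideanSpace ℝ (Fin (m+1))) 1, ‖f y‖ ≤ c) :
    IntegrableOn f (sphere (0 : EuclideanSpace ℝ (Fin (m+1))) 1) μH[(m:ℝ)] := by
  haveI : IsFiniteMeasure
      (μH[(m:ℝ)].restrict (sphere (0 : EuclideanSpace ℝ (Fin (m+1))) 1)) :=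
    ⟨by rw [Measure.restrict_apply_univ]; exact sphere_hausdorff_lt_top m⟩
  apply Integrable.mono' (integrable_const c) hf.aestronglyMeasurable
  exact (ae_restrict_iff' isClosed_sphere.measurableSet).mpr (ae_of_all _ hb)

/-- Barycenter estimate for nearly spherical sets: if the barycenter of `E` is `0`,
then `|∫_{∂B} y u(y)|² ≤ C(n) ε ‖u‖²_{L²(∂B)}`. -/
theorem barycenter_estimate (n : ℕ) (hn : 2 ≤ n) :
    ∃ C : ℝ, 0 < C ∧ ∃ ε₀ : ℝ, ε₀ ∈ Set.Ioo (0 : ℝ) 1 ∧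
      ∀ (u : EuclideanSpace ℝ (Fin n) → ℝ) (ε : ℝ), 0 ≤ ε → ε ≤ ε₀ →
        Continuous u →
        (∀ y ∈ sphere (0 : EuclideanSpace ℝ (Fin n)) 1, |u y| ≤ ε) →
        (∀ y ∈ sphere (0 : EuclideanSpace ℝ (Fin n)) 1, ‖gradient u y‖ ≤ ε) →
        -- barycenter condition `∫_E x dx = 0` in polar coordinates:
        (∫ y in sphere (0 : EuclideanSpace ℝ (Fin n)) 1,
            (1 + u y) ^ (n + 1) • y ∂μH[(n : ℝ) - 1]) = 0 →
        ‖∫ y in sphere (0 : EuclideanSpace ℝ (Fin n)) 1, u y • y ∂μH[(n : ℝ) - 1]‖ ^ 2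
          ≤ C * ε * ∫ y in sphere (0 : EuclideanSpace ℝ (Fin n)) 1,
              (u y) ^ 2 ∂μH[(n : ℝ) - 1] := by
  obtain ⟨m, rfl⟩ : ∃ m, n = m + 1 := ⟨n - 1, by omega⟩
  have hd : ((m+1:ℕ):ℝ) - 1 = (m:ℝ) := by push_cast; ring
  set S : Set (EuclideanSpace ℝ (Fin (m+1))) := sphere 0 1 with hS
  have hSmeas : MeasurableSet S := isClosed_sphere.measurableSet
  haveI : IsFiniteMeasure (μH[(m:ℝ)].restrict S) :=
    ⟨by rw [Measure.restrict_apply_univ]; exact sphere_hausdorff_lt_top m⟩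
  set M : ℝ := (μH[(m:ℝ)] S).toReal with hM
  have hMnn : 0 ≤ M := ENNReal.toReal_nonneg
  have hK : (0:ℝ) < 4^(m+2) := by positivity
  refine ⟨M * 4^(m+2) + 1, by positivity, 1/2, ⟨by norm_num, by norm_num⟩, ?_⟩
  intro u ε hε hεhalf hu hub hgrad hbar
  rw [hd] at hbar ⊢
  have hub1 : ∀ y ∈ S, |u y| ≤ 1 := fun y hy => (hub y hy).trans (by linarith)
  set r : ℝ → ℝ := fun t => (1+t)^(m+2) - 1 - ((m:ℝ)+2)*t with hr
  have hrb : ∀ t : ℝ, |t| ≤ 1 → |r t| ≤ 4^(m+2) * t^2 := by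
    intro t ht
    have := taylor_bound (m+2) ht
    have hc : ((m+2:ℕ):ℝ) = (m:ℝ)+2 := by push_cast; ring
    rw [hc] at this
    exact this
  -- continuity
  have hru : Continuous fun y => r (u y) := by
    simp only [hr]
    exact (((continuous_const.add hu).pow _).sub continuous_const).sub
      (continuous_const.mul hu)
  -- integrability
  have hI0 : IntegrableOn (fun y : EuclideanSpace ℝ (Fin (m+1)) => y) S μH[(m:ℝ)] :=
    integrable_of_bound _ 1 continuous_id
      (fun y hy => le_of_eq (mem_sphere_zero_iff_norm.mp hy))
  have hI1 : IntegrableOn (fun y => u y • y) S μH[(m:ℝ)] := by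
    apply integrable_of_bound (fun y => u y • y) ε (hu.smul continuous_id)
    intro y hy
    have hny : ‖y‖ = 1 := mem_sphere_zero_iff_norm.mp hy
    rw [norm_smul, Real.norm_eq_abs]
    simp only [id_eq, hny, mul_one]
    exact hub y hy
  have hIsmul : IntegrableOn (fun y => ((m:ℝ)+2) • (u y • y)) S μH[(m:ℝ)] := by
    apply integrable_of_bound (fun y => ((m:ℝ)+2) • (u y • y)) (((m:ℝ)+2) * ε) (by fun_prop)
    intro y hy
    have hny : ‖y‖ = 1 := mem_sphere_zero_iff_norm.mp hy
    rw [norm_smul, norm_smul, Real.norm_eq_abs, Real.norm_eq_abs,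
      abs_of_nonneg (by positivity : (0:ℝ) ≤ (m:ℝ)+2)]
    simp only [id_eq, hny, mul_one]
    exact mul_le_mul_of_nonneg_left (hub y hy) (by positivity)
  have hIr : IntegrableOn (fun y => r (u y) • y) S μH[(m:ℝ)] := by
    apply integrable_of_bound (fun y => r (u y) • y) (4^(m+2)) (hru.smul continuous_id)
    intro y hy
    have hny : ‖y‖ = 1 := mem_sphere_zero_iff_norm.mp hy
    rw [norm_smul, Real.norm_eq_abs]
    simp only [id_eq, hny, mul_one]
    calc |r (u y)| ≤ 4^(m+2) * (u y)^2 := hrb _ (hub1 y hy)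
      _ ≤ 4^(m+2) * 1 := by
          apply mul_le_mul_of_nonneg_left _ (le_of_lt hK)
          have := hub1 y hy
          nlinarith [sq_abs (u y), abs_nonneg (u y)]
      _ = 4^(m+2) := mul_one _
  have hIq : IntegrableOn (fun y => (u y)^2) S μH[(m:ℝ)] := by
    apply integrable_of_bound (fun y => (u y)^2) 1 (hu.pow 2)
    intro y hy
    rw [Real.norm_eq_abs, abs_pow]
    have := hub1 y hy
    nlinarith [abs_nonneg (u y)]
  -- split the barycenter integrand
  have hsplit : (fun y : EuclideanSpace ℝ (Fin (m+1)) => (1 + u y) ^ (m + 1 + 1) • y)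
      = fun y => y + ((m:ℝ)+2) • (u y • y) + r (u y) • y := by
    funext y
    have h1 : ((1 + u y) ^ (m + 1 + 1) : ℝ) = 1 + (((m:ℝ)+2) * u y) + r (u y) := by
      simp only [hr]; push_cast; ring
    rw [h1, add_smul, add_smul, one_smul, mul_smul]
  rw [hsplit] at hbar
  have hA : IntegrableOn (fun y => y + ((m:ℝ)+2) • (u y • y)) S μH[(m:ℝ)] :=
    hI0.add hIsmul
  have hzero : (∫ y in S, y ∂μH[(m:ℝ)]) = 0 := integral_id_sphere_zero (m+1) (m:ℝ)
  rw [integral_add hA hIr, integral_add hI0 hIsmul, hzero, zero_add,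
    integral_smul] at hbar
  set I := ∫ y in S, u y • y ∂μH[(m:ℝ)] with hI
  set J := ∫ y in S, r (u y) • y ∂μH[(m:ℝ)] with hJdef
  have hIJ : ((m:ℝ)+2) • I = -J := by
    have := hbar
    rw [add_eq_zero_iff_eq_neg] at this
    exact this
  have hnIJ : ((m:ℝ)+2) * ‖I‖ = ‖J‖ := by
    rw [← norm_neg J, ← hIJ, norm_smul, Real.norm_eq_abs,
      abs_of_nonneg (by positivity : (0:ℝ) ≤ (m:ℝ)+2)]
  have hm2 : (1:ℝ) ≤ (m:ℝ)+2 := by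
    have : (0:ℝ) ≤ (m:ℝ) := Nat.cast_nonneg m
    linarith
  have hnormI_le_J : ‖I‖ ≤ ‖J‖ := by
    nlinarith [norm_nonneg I]
  set Q := ∫ y in S, (u y)^2 ∂μH[(m:ℝ)] with hQ
  have hQnn : 0 ≤ Q := integral_nonneg (fun y => sq_nonneg _)
  have hJb : ‖J‖ ≤ 4^(m+2) * Q := by
    calc ‖J‖ ≤ ∫ y in S, ‖r (u y) • y‖ ∂μH[(m:ℝ)] := norm_integral_le_integral_norm _
      _ ≤ ∫ y in S, 4^(m+2) * (u y)^2 ∂μH[(m:ℝ)] := by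
          apply setIntegral_mono_on hIr.norm (hIq.const_mul _) hSmeas
          intro y hy
          rw [norm_smul, Real.norm_eq_abs, mem_sphere_zero_iff_norm.mp hy, mul_one]
          exact hrb _ (hub1 y hy)
      _ = 4^(m+2) * Q := by rw [integral_const_mul]
  have hIe : ‖I‖ ≤ ε * M := by
    calc ‖I‖ ≤ ∫ y in S, ‖u y • y‖ ∂μH[(m:ℝ)] := norm_integral_le_integral_norm _
      _ ≤ ∫ y in S, ε ∂μH[(m:ℝ)] := by
          apply setIntegral_mono_on hI1.norm (integrable_const ε) hSmeas
          intro y hy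
          rw [norm_smul, Real.norm_eq_abs, mem_sphere_zero_iff_norm.mp hy, mul_one]
          exact hub y hy
      _ = ε * M := by rw [setIntegral_const, smul_eq_mul, mul_comm, measureReal_def]
  have hfinal : ‖I‖^2 ≤ (ε * M) * (4^(m+2) * Q) := by
    rw [sq]
    exact mul_le_mul hIe (hnormI_le_J.trans hJb) (norm_nonneg _)
      (mul_nonneg hε hMnn)
  nlinarith [mul_nonneg hε hQnn]
end
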